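/- For n ≥ 1, let K_n be the n×n real symmetric matrix indexed by {0,…,n−1} with (K_n)(i, i+1) = (K_n)(i+1, i) = √((i+1)(n−1−i)) for 0 ≤ i ≤ n−2 and all other entries 0, regarded as a complex matrix. Then exp(−i (π/2) K_n) = (−i)^{n−1} · R_n, where R_n is the n×n reversal permutation matrix with R_n(a, b) = 1 if a + b = n − 1 and R_n(a, b) = 0 otherwise. In particular, for every vertex u, exp(−i(π/2) K_n) maps the standard basis vector e_u to (−i)^{n−1} e_{n−1−u}. -/

import Mathlib

open Matrix

/-- The Kac matrix: adjacency matrix of the hypercubically weighted path graph `P̃_n`,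
with `K(i, i+1) = K(i+1, i) = √((i+1)(n−1−i))` (0-based indices) and all other entries 0. -/
noncomputable def kacMatrix (n : ℕ) : Matrix (Fin n) (Fin n) ℝ :=
  Matrix.of fun i j =>
    if (i : ℕ) + 1 = (j : ℕ) then
      Real.sqrt ((((i : ℕ) : ℝ) + 1) * ((n : ℝ) - 1 - ((i : ℕ) : ℝ)))
    else if (j : ℕ) + 1 = (i : ℕ) then
      Real.sqrt ((((j : ℕ) : ℝ) + 1) * ((n : ℝ) - 1 - ((j : ℕ) : ℝ)))
    else 0

/-- The reversal permutation matrix `R_n`, with `R(a,b) = 1` iff `a + b = n − 1`. -/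
def revMatrix (n : ℕ) : Matrix (Fin n) (Fin n) ℂ :=
  Matrix.of fun a b => if (a : ℕ) + (b : ℕ) = n - 1 then 1 else 0


open NormedSpace
open scoped symmDiff

variable {A : Type*} [NormedRing A] [NormedAlgebra ℂ A] [CompleteSpace A]

/-- exp of a scalar multiple of an idempotent. -/
theorem exp_smul_idem (P : A) (hP : P * P = P) (a : ℂ) :
    exp (a • P) = 1 + (Complex.exp a - 1) • P := by
  have hPn : ∀ k : ℕ, P ^ (k + 1) = P := by
    intro k; induction k with
    | zero => simp
    | succ k ih => rw [pow_succ, ih, hP]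
  have hsum := expSeries_summable' (𝕂 := ℂ) (a • P)
  rw [exp_eq_tsum ℂ]; simp only []; rw [Summable.tsum_eq_zero_add hsum]
  have h1 : (fun k : ℕ => (((k+1).factorial : ℂ))⁻¹ • (a • P) ^ (k+1)) =
      fun k : ℕ => ((((k+1).factorial : ℂ))⁻¹ * a ^ (k+1)) • P := by
    funext k; rw [smul_pow, hPn k, smul_smul]
  rw [h1]
  have hsum2 : Summable fun k : ℕ => (((k+1).factorial : ℂ))⁻¹ * a ^ (k+1) := by
    have := (expSeries_summable' (𝕂 := ℂ) a).comp_injective (add_left_injective 1)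
    exact this
  rw [Summable.tsum_smul_const hsum2]
  have hexp : (∑' k : ℕ, (((k+1).factorial : ℂ))⁻¹ * a ^ (k+1)) = Complex.exp a - 1 := by
    have h3 := Summable.tsum_eq_zero_add (expSeries_summable' (𝕂 := ℂ) a)
    rw [Complex.exp_eq_exp_ℂ, exp_eq_tsum ℂ]
    simp only []
    rw [h3]
    simp [smul_eq_mul]
  rw [hexp]
  simp

theorem exp_smul_invol (X : A) (hX : X * X = 1) (a : ℂ) :
    exp (a • X) = ((Complex.exp a + Complex.exp (-a)) / 2) • (1 : A) +
      ((Complex.exp a - Complex.exp (-a)) / 2) • X := by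
  set P : A := (2⁻¹ : ℂ) • (1 + X) with hPdef
  set Q : A := (2⁻¹ : ℂ) • (1 - X) with hQdef
  have hexpand : ∀ (r s : ℂ) (M N : A), (r • M) * (s • N) = (r * s) • (M * N) := by
    intro r s M N; rw [smul_mul_assoc, mul_smul_comm, smul_smul]
  have hPP : P * P = P := by
    rw [hPdef, hexpand]
    have : (1 + X) * (1 + X) = (2 : ℂ) • (1 + X) := by
      rw [add_mul, mul_add, mul_add, hX, one_mul, mul_one, two_smul]; noncomm_ring
    rw [this, smul_smul]; norm_num
  have hQQ : Q * Q = Q := by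
    rw [hQdef, hexpand]
    have : (1 - X) * (1 - X) = (2 : ℂ) • (1 - X) := by
      rw [sub_mul, mul_sub, mul_sub, hX, one_mul, mul_one, two_smul]; noncomm_ring
    rw [this, smul_smul]; norm_num
  have hPQ : P * Q = 0 := by
    rw [hPdef, hQdef, hexpand]
    have : (1 + X) * (1 - X) = 0 := by
      rw [add_mul, mul_sub, mul_sub, hX, one_mul, mul_one]; noncomm_ring
    rw [this, smul_zero]
  have hQP : Q * P = 0 := by
    rw [hPdef, hQdef, hexpand]
    have : (1 - X) * (1 + X) = 0 := by
      rw [sub_mul, mul_add, mul_add, hX, one_mul, mul_one]; noncomm_ring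
    rw [this, smul_zero]
  have hsplit : a • X = a • P + (-a) • Q := by
    rw [hPdef, hQdef]; module
  have hcomm : Commute (a • P) ((-a) • Q) := by
    have h1 : (a • P) * ((-a) • Q) = 0 := by rw [hexpand, hPQ, smul_zero]
    have h2 : ((-a) • Q) * (a • P) = 0 := by rw [hexpand, hQP, smul_zero]
    rw [Commute, SemiconjBy, h1, h2]
  rw [hsplit, exp_add_of_commute_of_mem_ball (𝕂 := ℂ) hcomm (by simp [expSeries_radius_eq_top])
    (by simp [expSeries_radius_eq_top]), exp_smul_idem P hPP, exp_smul_idem Q hQQ]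
  have : (1 + (Complex.exp a - 1) • P) * (1 + (Complex.exp (-a) - 1) • Q)
      = 1 + (Complex.exp a - 1) • P + (Complex.exp (-a) - 1) • Q := by
    rw [mul_add, mul_one, add_mul, one_mul, hexpand, hPQ, smul_zero, add_zero]
  rw [this, hPdef, hQdef]
  module

open NormedSpace Matrix

theorem exp_intertwine {N n : Type*} [Fintype N] [DecidableEq N] [Fintype n] [DecidableEq n]
    (M : Matrix N N ℂ) (K : Matrix n n ℂ) (V : Matrix N n ℂ) (h : M * V = V * K) :
    exp M * V = V * exp K := by
  letI : SeminormedRing (Matrix N N ℂ) := Matrix.linftyOpSemiNormedRing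
  letI : NormedRing (Matrix N N ℂ) := Matrix.linftyOpNormedRing
  letI : NormedAlgebra ℂ (Matrix N N ℂ) := Matrix.linftyOpNormedAlgebra
  letI : SeminormedRing (Matrix n n ℂ) := Matrix.linftyOpSemiNormedRing
  letI : NormedRing (Matrix n n ℂ) := Matrix.linftyOpNormedRing
  letI : NormedAlgebra ℂ (Matrix n n ℂ) := Matrix.linftyOpNormedAlgebra
  have hpow : ∀ k : ℕ, M ^ k * V = V * K ^ k := by
    intro k; induction k with
    | zero => simp
    | succ k ih =>
        rw [pow_succ, pow_succ]
        calc M ^ k * M * V = M ^ k * (M * V) := by rw [Matrix.mul_assoc]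
        _ = M ^ k * (V * K) := by rw [h]
        _ = (M ^ k * V) * K := by rw [Matrix.mul_assoc]
        _ = V * K ^ k * K := by rw [ih]
        _ = V * (K ^ k * K) := by rw [Matrix.mul_assoc]
  let L1 : Matrix N N ℂ →ₗ[ℂ] Matrix N n ℂ :=
    { toFun := fun A => A * V
      map_add' := fun A B => Matrix.add_mul A B V
      map_smul' := fun c A => Matrix.smul_mul c A V }
  let L2 : Matrix n n ℂ →ₗ[ℂ] Matrix N n ℂ :=
    { toFun := fun B => V * B
      map_add' := fun A B => Matrix.mul_add V A B
      map_smul' := fun c A => Matrix.mul_smul V c A }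
  have hc1 : Continuous L1 := L1.continuous_of_finiteDimensional
  have hc2 : Continuous L2 := L2.continuous_of_finiteDimensional
  let C1 : Matrix N N ℂ →L[ℂ] Matrix N n ℂ := ⟨L1, hc1⟩
  let C2 : Matrix n n ℂ →L[ℂ] Matrix N n ℂ := ⟨L2, hc2⟩
  have h1 : exp M * V = ∑' k : ℕ, (((k.factorial : ℂ)⁻¹ • M ^ k) * V) := by
    rw [exp_eq_tsum ℂ]
    exact C1.map_tsum (expSeries_summable' (𝕂 := ℂ) M)
  have h2 : V * exp K = ∑' k : ℕ, (V * ((k.factorial : ℂ)⁻¹ • K ^ k)) := by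
    rw [exp_eq_tsum ℂ]
    exact C2.map_tsum (expSeries_summable' (𝕂 := ℂ) K)
  rw [h1, h2]
  congr 1
  funext k
  rw [Matrix.smul_mul, hpow, Matrix.mul_smul]

open NormedSpace Matrix
open scoped symmDiff

variable {m : ℕ}

/-- permutation matrix of `S ↦ S ∆ I` on the hypercube `Finset (Fin m)`. -/
def flipMat (m : ℕ) (I : Finset (Fin m)) : Matrix (Finset (Fin m)) (Finset (Fin m)) ℂ :=
  Matrix.of fun S T => if T = S ∆ I then 1 else 0

theorem flipMat_mul (I J : Finset (Fin m)) :
    flipMat m I * flipMat m J = flipMat m (I ∆ J) := by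
  ext S T
  rw [Matrix.mul_apply]
  rw [Finset.sum_eq_single (S ∆ I) (fun U _ hU => by
    simp only [flipMat, Matrix.of_apply, if_neg hU, zero_mul]) (by simp)]
  simp only [flipMat, Matrix.of_apply, if_pos rfl, one_mul, symmDiff_assoc, if_true]

theorem flipMat_empty : flipMat m ∅ = 1 := by
  ext S T
  simp only [flipMat, Matrix.of_apply, Matrix.one_apply]
  rw [show S ∆ (∅ : Finset (Fin m)) = S by simp]
  by_cases h : T = S
  · simp [h]
  · simp [h, Ne.symm h]

theorem flipMat_sq (I : Finset (Fin m)) : flipMat m I * flipMat m I = 1 := by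
  rw [flipMat_mul, symmDiff_self]
  exact flipMat_empty

theorem flipMat_comm (I J : Finset (Fin m)) :
    Commute (flipMat m I) (flipMat m J) := by
  rw [Commute, SemiconjBy, flipMat_mul, flipMat_mul, symmDiff_comm]

theorem Complex.exp_neg_I_pi_div_two :
    Complex.exp (-(Complex.I * ((Real.pi : ℂ) / 2))) = -Complex.I := by
  rw [show -(Complex.I * ((Real.pi : ℂ) / 2)) = (-((Real.pi : ℂ)/2)) * Complex.I by ring,
    Complex.exp_mul_I, Complex.cos_neg, Complex.sin_neg]
  have hc : Complex.cos ((Real.pi : ℂ)/2) = 0 := by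
    rw [show ((Real.pi : ℂ)/2) = ((Real.pi/2 : ℝ) : ℂ) by push_cast; ring,
      ← Complex.ofReal_cos, Real.cos_pi_div_two, Complex.ofReal_zero]
  have hs : Complex.sin ((Real.pi : ℂ)/2) = 1 := by
    rw [show ((Real.pi : ℂ)/2) = ((Real.pi/2 : ℝ) : ℂ) by push_cast; ring,
      ← Complex.ofReal_sin, Real.sin_pi_div_two, Complex.ofReal_one]
  rw [hc, hs]; ring

theorem Complex.exp_I_pi_div_two :
    Complex.exp (Complex.I * ((Real.pi : ℂ) / 2)) = Complex.I := by
  rw [show Complex.I * ((Real.pi : ℂ) / 2) = (((Real.pi : ℂ)/2)) * Complex.I by ring,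
    Complex.exp_mul_I]
  have hc : Complex.cos ((Real.pi : ℂ)/2) = 0 := by
    rw [show ((Real.pi : ℂ)/2) = ((Real.pi/2 : ℝ) : ℂ) by push_cast; ring,
      ← Complex.ofReal_cos, Real.cos_pi_div_two, Complex.ofReal_zero]
  have hs : Complex.sin ((Real.pi : ℂ)/2) = 1 := by
    rw [show ((Real.pi : ℂ)/2) = ((Real.pi/2 : ℝ) : ℂ) by push_cast; ring,
      ← Complex.ofReal_sin, Real.sin_pi_div_two, Complex.ofReal_one]
  rw [hc, hs]; ring

theorem exp_smul_flip (k : Fin m) :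
    exp ((-(Complex.I * ((Real.pi : ℂ) / 2))) • flipMat m {k}) =
      (-Complex.I) • flipMat m {k} := by
  letI : SeminormedRing (Matrix (Finset (Fin m)) (Finset (Fin m)) ℂ) :=
    Matrix.linftyOpSemiNormedRing
  letI : NormedRing (Matrix (Finset (Fin m)) (Finset (Fin m)) ℂ) := Matrix.linftyOpNormedRing
  letI : NormedAlgebra ℂ (Matrix (Finset (Fin m)) (Finset (Fin m)) ℂ) :=
    Matrix.linftyOpNormedAlgebra
  erw [exp_smul_invol _ (flipMat_sq {k})]
  rw [Complex.exp_neg_I_pi_div_two,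
    show -(-(Complex.I * ((Real.pi : ℂ) / 2))) = Complex.I * ((Real.pi : ℂ) / 2) by ring,
    Complex.exp_I_pi_div_two]
  rw [show (-Complex.I + Complex.I) / 2 = 0 by ring, show (-Complex.I - Complex.I)/2 = -Complex.I by ring]
  rw [zero_smul, zero_add]

theorem flip_comm_smul (x y : Fin m) :
    Commute ((-Complex.I) • flipMat m {x}) ((-Complex.I) • flipMat m {y}) :=
  ((flipMat_comm {x} {y}).smul_left _).smul_right _

theorem noncommProd_negI_flip (I : Finset (Fin m)) :
    I.noncommProd (fun k => (-Complex.I) • flipMat m {k})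
      (fun x _ y _ _ => flip_comm_smul x y) =
      (-Complex.I) ^ I.card • flipMat m I := by
  induction I using Finset.induction_on with
  | empty => simp [flipMat_empty]
  | @insert a I ha ih =>
      rw [Finset.noncommProd_insert_of_notMem I a _ (fun x _ y _ _ => flip_comm_smul x y) ha, ih,
        Finset.card_insert_of_notMem ha]
      rw [smul_mul_assoc, Matrix.mul_smul, flipMat_mul, smul_smul, ← pow_succ']
      congr 2
      rw [(Finset.disjoint_singleton_left.mpr ha).symmDiff_eq_sup, Finset.sup_eq_union,
        ← Finset.insert_eq]

theorem exp_smul_hyper (m : ℕ) :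
    exp ((-(Complex.I * ((Real.pi : ℂ) / 2))) • ∑ k : Fin m, flipMat m {k}) =
      (-Complex.I) ^ m • flipMat m Finset.univ := by
  rw [Finset.smul_sum]
  rw [Matrix.exp_sum_of_commute Finset.univ
    (fun k => (-(Complex.I * ((Real.pi : ℂ) / 2))) • flipMat m {k})
    (fun x _ y _ _ => ((flipMat_comm {x} {y}).smul_left _).smul_right _)]
  rw [Finset.noncommProd_congr rfl (fun k _ => exp_smul_flip (m := m) k)
    (fun x _ y _ _ => by
      dsimp only [Function.onFun]
      rw [exp_smul_flip, exp_smul_flip]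
      exact flip_comm_smul x y)]
  rw [noncommProd_negI_flip, Finset.card_univ, Fintype.card_fin]

theorem card_filter_card_eq (m u : ℕ) :
    (Finset.univ.filter (fun S : Finset (Fin m) => S.card = u)).card = m.choose u := by
  have h : Finset.filter (fun S : Finset (Fin m) => S.card = u) Finset.univ =
      Finset.powersetCard u (Finset.univ : Finset (Fin m)) := by
    rw [Finset.powersetCard_eq_filter, Finset.powerset_univ]
  rw [h, Finset.card_powersetCard, Finset.card_univ, Fintype.card_fin]

theorem nat_choose_id (m w : ℕ) (h : w < m) :
    ((m.choose (w+1) : ℝ)) * ((w:ℝ)+1) = (m.choose w : ℝ) * ((m:ℝ) - w) := by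
  have h2 := congrArg (Nat.cast : ℕ → ℝ) (Nat.choose_succ_right_eq m w)
  push_cast [Nat.cast_sub h.le] at h2
  linarith

theorem key0 (m w : ℕ) (h : w < m) :
    ((m:ℝ) - w) * Real.sqrt (m.choose w) =
      Real.sqrt (((w:ℝ)+1) * ((m:ℝ)-w)) * Real.sqrt (m.choose (w+1)) := by
  have hmw : (0:ℝ) ≤ (m:ℝ) - w := by
    have : (w : ℝ) ≤ (m : ℝ) := by exact_mod_cast h.le
    linarith
  have hw1 : (0:ℝ) ≤ (w:ℝ) + 1 := by positivity
  conv_lhs => rw [← Real.sqrt_sq hmw]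
  rw [← Real.sqrt_mul (by positivity), ← Real.sqrt_mul (mul_nonneg hw1 hmw)]
  congr 1
  nlinarith [nat_choose_id m w h]

theorem key0' (m w : ℕ) (h : w < m) :
    ((w:ℝ) + 1) * Real.sqrt (m.choose (w+1)) =
      Real.sqrt (((w:ℝ)+1) * ((m:ℝ)-w)) * Real.sqrt (m.choose w) := by
  have hmw : (0:ℝ) ≤ (m:ℝ) - w := by
    have : (w : ℝ) ≤ (m : ℝ) := by exact_mod_cast h.le
    linarith
  have hw1 : (0:ℝ) ≤ (w:ℝ) + 1 := by positivity
  conv_lhs => rw [← Real.sqrt_sq hw1]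
  rw [← Real.sqrt_mul (by positivity), ← Real.sqrt_mul (mul_nonneg hw1 hmw)]
  congr 1
  nlinarith [nat_choose_id m w h]

noncomputable def invs (m u : ℕ) : ℝ := (Real.sqrt (m.choose u))⁻¹

theorem sqrt_choose_pos (m u : ℕ) (h : u ≤ m) : 0 < Real.sqrt (m.choose u) := by
  have := Nat.choose_pos h
  positivity

theorem key1 (m w : ℕ) (h : w < m) :
    ((m:ℝ) - w) * invs m (w+1) = Real.sqrt (((w:ℝ)+1) * ((m:ℝ)-w)) * invs m w := by
  have h1 := sqrt_choose_pos m w h.le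
  have h2 := sqrt_choose_pos m (w+1) h
  unfold invs
  rw [inv_eq_one_div, inv_eq_one_div, mul_one_div, mul_one_div,
    div_eq_div_iff h2.ne' h1.ne']
  linear_combination key0 m w h

theorem key2 (m w : ℕ) (h : w < m) :
    ((w:ℝ) + 1) * invs m w = Real.sqrt (((w:ℝ)+1) * ((m:ℝ)-w)) * invs m (w+1) := by
  have h1 := sqrt_choose_pos m w h.le
  have h2 := sqrt_choose_pos m (w+1) h
  unfold invs
  rw [inv_eq_one_div, inv_eq_one_div, mul_one_div, mul_one_div,
    div_eq_div_iff h1.ne' h2.ne']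
  linear_combination key0' m w h

noncomputable def VM (m : ℕ) : Matrix (Finset (Fin m)) (Fin (m+1)) ℂ :=
  Matrix.of fun S u => if S.card = (u : ℕ) then ((invs m u : ℝ) : ℂ) else 0

noncomputable def VtM (m : ℕ) : Matrix (Fin (m+1)) (Finset (Fin m)) ℂ :=
  Matrix.of fun u S => if S.card = (u : ℕ) then ((invs m u : ℝ) : ℂ) else 0

theorem Vt_mul_V (m : ℕ) : VtM m * VM m = 1 := by
  ext u v
  rw [Matrix.mul_apply, Matrix.one_apply]
  by_cases huv : u = v
  · subst huv
    rw [if_pos rfl]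
    have hterm : ∀ S : Finset (Fin m),
        (VtM m u S) * (VM m S u) =
          if S.card = (u : ℕ) then ((invs m u : ℝ) : ℂ) * ((invs m u : ℝ) : ℂ) else 0 := by
      intro S
      simp only [VtM, VM, Matrix.of_apply]
      split_ifs <;> simp
    rw [Finset.sum_congr rfl (fun S _ => hterm S)]
    rw [Finset.sum_ite, Finset.sum_const, Finset.sum_const_zero, add_zero,
      card_filter_card_eq]
    have hu : (u : ℕ) ≤ m := Nat.lt_succ_iff.mp u.isLt
    have hpos : (0 : ℝ) < (m.choose u : ℝ) := by exact_mod_cast Nat.choose_pos hu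
    have hsq : ((invs m u : ℝ) : ℂ) * ((invs m u : ℝ) : ℂ) = ((m.choose u : ℂ))⁻¹ := by
      rw [← Complex.ofReal_mul]
      unfold invs
      rw [← mul_inv, Real.mul_self_sqrt hpos.le]
      push_cast
      rfl
    rw [hsq, nsmul_eq_mul]
    rw [mul_inv_cancel₀ (by exact_mod_cast hpos.ne')]
  · rw [if_neg huv]
    apply Finset.sum_eq_zero
    intro S _
    simp only [VtM, VM, Matrix.of_apply]
    split_ifs with h1 h2
    · exact absurd (Fin.val_injective (h1 ▸ h2)) huv
    · exact mul_zero _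
    · exact zero_mul _
    · exact zero_mul _

theorem flip_mul_apply (I : Finset (Fin m)) (W : Matrix (Finset (Fin m)) (Fin (m+1)) ℂ)
    (S : Finset (Fin m)) (u : Fin (m+1)) :
    (flipMat m I * W) S u = W (S ∆ I) u := by
  rw [Matrix.mul_apply]
  rw [Finset.sum_eq_single (S ∆ I) (fun U _ hU => by
    simp only [flipMat, Matrix.of_apply, if_neg hU, zero_mul]) (by simp)]
  simp [flipMat]

theorem symmDiff_singleton_of_mem {S : Finset (Fin m)} {k : Fin m} (h : k ∈ S) :
    S ∆ ({k} : Finset (Fin m)) = S.erase k := by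
  ext x
  simp only [Finset.mem_symmDiff, Finset.mem_singleton, Finset.mem_erase]
  constructor
  · rintro (⟨hx, hk⟩ | ⟨rfl, hk⟩)
    · exact ⟨fun he => hk (he ▸ rfl), hx⟩
    · exact absurd h hk
  · rintro ⟨hne, hx⟩
    exact Or.inl ⟨hx, fun he => hne he⟩

theorem symmDiff_singleton_of_not_mem {S : Finset (Fin m)} {k : Fin m} (h : k ∉ S) :
    S ∆ ({k} : Finset (Fin m)) = insert k S := by
  ext x
  simp only [Finset.mem_symmDiff, Finset.mem_singleton, Finset.mem_insert]
  constructor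
  · rintro (⟨hx, _⟩ | ⟨rfl, _⟩)
    · exact Or.inr hx
    · exact Or.inl rfl
  · rintro (rfl | hx)
    · exact Or.inr ⟨rfl, h⟩
    · exact Or.inl ⟨hx, fun he => h (he ▸ hx)⟩

theorem hyper_mul_V (m : ℕ) :
    (∑ k : Fin m, flipMat m {k}) * VM m =
      VM m * (kacMatrix (m+1)).map Complex.ofReal := by
  ext S u
  have hw : S.card ≤ m := by
    have := Finset.card_le_univ S
    simpa [Finset.card_univ] using this
  set w : ℕ := S.card with hwdef
  rw [Matrix.sum_mul, Matrix.sum_apply]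
  rw [Finset.sum_congr rfl (fun k _ => flip_mul_apply {k} (VM m) S u)]
  rw [← Finset.sum_filter_add_sum_filter_not Finset.univ (fun k => k ∈ S)]
  have hfil1 : Finset.univ.filter (fun k : Fin m => k ∈ S) = S := by ext; simp
  have hfil2 : Finset.univ.filter (fun k : Fin m => ¬ k ∈ S) = Sᶜ := by ext; simp
  rw [hfil1, hfil2]
  have hin : ∀ k ∈ S, VM m (S ∆ {k}) u =
      (if w - 1 = (u:ℕ) then ((invs m u : ℝ):ℂ) else 0) := by
    intro k hk
    rw [symmDiff_singleton_of_mem hk]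
    simp only [VM, Matrix.of_apply, Finset.card_erase_of_mem hk]
    rw [hwdef]
  have hout : ∀ k ∈ Sᶜ, VM m (S ∆ {k}) u =
      (if w + 1 = (u:ℕ) then ((invs m u : ℝ):ℂ) else 0) := by
    intro k hk
    rw [symmDiff_singleton_of_not_mem (Finset.mem_compl.mp hk)]
    simp only [VM, Matrix.of_apply, Finset.card_insert_of_notMem (Finset.mem_compl.mp hk)]
    rw [hwdef]
  rw [Finset.sum_congr rfl hin, Finset.sum_congr rfl hout, Finset.sum_const, Finset.sum_const,
    Finset.card_compl, Fintype.card_fin]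
  rw [Matrix.mul_apply]
  have hw' : w < m + 1 := Nat.lt_succ_of_le hw
  rw [Finset.sum_eq_single (⟨w, hw'⟩ : Fin (m+1)) (fun v _ hv => by
    have hne : ¬ (S.card = (v:ℕ)) := fun hc => hv (Fin.ext (by simp [← hc, hwdef]))
    simp [VM, hne]) (by simp)]
  have hSw' : VM m S ⟨w, hw'⟩ = ((invs m w : ℝ) : ℂ) := by simp [VM, hwdef]
  rw [hSw', Matrix.map_apply]
  simp only [kacMatrix, Matrix.of_apply]
  by_cases h1 : w + 1 = (u:ℕ)
  · have hum : (u:ℕ) ≤ m := Nat.lt_succ_iff.mp u.isLt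
    have hwm : w < m := by omega
    have hne : ¬ (w - 1 = (u:ℕ)) := by omega
    rw [if_neg hne, smul_zero, zero_add, if_pos h1]
    rw [if_pos (show ((⟨w, hw'⟩ : Fin (m+1)):ℕ) + 1 = (u:ℕ) from h1)]
    have harg : ((((⟨w, hw'⟩ : Fin (m+1)):ℕ)):ℝ) + 1 = (w:ℝ) + 1 := by norm_num
    have harg2 : (((m+1:ℕ)):ℝ) - 1 - ((((⟨w, hw'⟩ : Fin (m+1)):ℕ)):ℝ) = (m:ℝ) - w := by
      push_cast; ring
    rw [show (((((⟨w, hw'⟩ : Fin (m+1)):ℕ)):ℝ) + 1) * ((((m+1:ℕ)):ℝ) - 1 -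
        ((((⟨w, hw'⟩ : Fin (m+1)):ℕ)):ℝ)) = ((w:ℝ) + 1) * ((m:ℝ) - w) by rw [harg, harg2]]
    have hu : (u : ℕ) = w + 1 := h1.symm
    rw [nsmul_eq_mul, hu]
    rw [show ((m - w : ℕ) : ℂ) = Complex.ofReal ((m:ℝ) - w) by
      push_cast [Nat.cast_sub hwm.le]; norm_num]
    rw [← Complex.ofReal_mul, ← Complex.ofReal_mul]
    rw [key1 m w hwm]
    norm_num [mul_comm]
  · by_cases h2 : (u:ℕ) + 1 = w
    · have hum : (u:ℕ) < m := by omega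
      have hte : w - 1 = (u:ℕ) := by omega
      rw [if_pos hte, if_neg h1, smul_zero, add_zero]
      rw [if_neg (show ¬ ((((⟨w, hw'⟩ : Fin (m+1)):ℕ)) + 1 = (u:ℕ)) from by
        simpa using h1)]
      rw [if_pos (show (u:ℕ) + 1 = (((⟨w, hw'⟩ : Fin (m+1)):ℕ)) from h2)]
      have harg2 : (((m+1:ℕ)):ℝ) - 1 - ((u:ℕ):ℝ) = (m:ℝ) - (u:ℕ) := by push_cast; ring
      rw [show ((((u:ℕ)):ℝ) + 1) * ((((m+1:ℕ)):ℝ) - 1 - (((u:ℕ)):ℝ)) =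
        (((u:ℕ):ℝ) + 1) * ((m:ℝ) - (u:ℕ)) by rw [harg2]]
      have hwu : w = (u:ℕ) + 1 := h2.symm
      rw [nsmul_eq_mul, show S.card = (u:ℕ)+1 from hwu]
      rw [show (((u:ℕ) + 1 : ℕ) : ℂ) = Complex.ofReal (((u:ℕ):ℝ) + 1) by push_cast; norm_num]
      rw [← Complex.ofReal_mul, ← Complex.ofReal_mul]
      rw [key2 m (u:ℕ) hum]
      rw [show invs m ((u:ℕ)+1) = invs m w from by rw [hwu]]
      norm_num [mul_comm]
    · rw [if_neg h1, smul_zero, add_zero]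
      rw [if_neg (show ¬ ((((⟨w, hw'⟩ : Fin (m+1)):ℕ)) + 1 = (u:ℕ)) from by simpa using h1)]
      rw [if_neg (show ¬ ((u:ℕ) + 1 = (((⟨w, hw'⟩ : Fin (m+1)):ℕ))) from by simpa using h2)]
      have hz : ((invs m w : ℝ):ℂ) * ((0:ℝ):ℂ) = 0 := by norm_num
      rw [hz]
      rcases Nat.eq_zero_or_pos w with hw0 | hw0
      · rw [show S.card = 0 from hw0, zero_smul]
      · rw [if_neg (show ¬ (w - 1 = (u:ℕ)) from by omega), smul_zero]

theorem univflip_mul_V (m : ℕ) :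
    flipMat m Finset.univ * VM m = VM m * revMatrix (m+1) := by
  ext S u
  rw [flip_mul_apply]
  have hw : S.card ≤ m := by
    have := Finset.card_le_univ S
    simpa [Finset.card_univ] using this
  have hum : (u:ℕ) ≤ m := Nat.lt_succ_iff.mp u.isLt
  have hcompl : S ∆ Finset.univ = Sᶜ := by
    rw [← Finset.top_eq_univ, symmDiff_top, hnot_eq_compl]
  rw [hcompl]
  have hcard : Sᶜ.card = m - S.card := by rw [Finset.card_compl, Fintype.card_fin]
  rw [Matrix.mul_apply]
  have hw' : S.card < m + 1 := Nat.lt_succ_of_le hw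
  rw [Finset.sum_eq_single (⟨S.card, hw'⟩ : Fin (m+1)) (fun v _ hv => by
    have hne : ¬ (S.card = (v:ℕ)) := fun hc => hv (Fin.ext (by simp [← hc]))
    simp [VM, hne]) (by simp)]
  simp only [VM, revMatrix, Matrix.of_apply, hcard, if_true]
  by_cases h : S.card + (u:ℕ) = (m+1) - 1
  · rw [if_pos h, if_pos (show m - S.card = (u:ℕ) by omega)]
    have : m.choose (u:ℕ) = m.choose S.card := by
      rw [show (u:ℕ) = m - S.card by omega, Nat.choose_symm hw]
    rw [mul_one]
    unfold invs
    rw [this]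
  · rw [if_neg h, if_neg (show ¬ (m - S.card = (u:ℕ)) by omega), mul_zero]

theorem main_succ (m : ℕ) :
    exp ((-(Complex.I * ((Real.pi : ℂ) / 2))) • (kacMatrix (m+1)).map Complex.ofReal) =
      (-Complex.I) ^ m • revMatrix (m+1) := by
  set c := -(Complex.I * ((Real.pi : ℂ) / 2)) with hc
  have hAV : (c • ∑ k : Fin m, flipMat m {k}) * VM m =
      VM m * (c • (kacMatrix (m+1)).map Complex.ofReal) := by
    rw [Matrix.smul_mul, hyper_mul_V, Matrix.mul_smul]
  have h1 := exp_intertwine _ _ _ hAV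
  rw [exp_smul_hyper] at h1
  rw [Matrix.smul_mul, univflip_mul_V, ← Matrix.mul_smul] at h1
  have h2 := congrArg (fun M => VtM m * M) h1
  rw [← Matrix.mul_assoc, ← Matrix.mul_assoc, Vt_mul_V, Matrix.one_mul, Matrix.one_mul] at h2
  exact h2.symm

/-- `exp(−i(π/2) K_n) = (−i)^{n−1} R_n`: single-particle perfect state
transfer between mirror-symmetric vertices of the weighted path at time `π/2`. -/
theorem stmt11 (n : ℕ) (hn : 1 ≤ n) :
    NormedSpace.exp ((-(Complex.I * ((Real.pi : ℂ) / 2))) •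
        (kacMatrix n).map Complex.ofReal) = (-Complex.I) ^ (n - 1) • revMatrix n ∧
      ∀ u : Fin n,
        (NormedSpace.exp ((-(Complex.I * ((Real.pi : ℂ) / 2))) •
            (kacMatrix n).map Complex.ofReal)).mulVec (Pi.single u 1 : Fin n → ℂ) =
          (-Complex.I) ^ (n - 1) • (Pi.single u.rev 1 : Fin n → ℂ) := by
  obtain ⟨m, rfl⟩ : ∃ m, n = m + 1 := ⟨n - 1, by omega⟩
  have hm : m + 1 - 1 = m := rfl
  rw [hm]
  constructor
  · exact main_succ m
  · intro u
    rw [main_succ m]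
    rw [Matrix.smul_mulVec]
    congr 1
    rw [Matrix.mulVec_single_one]
    funext a
    rw [Pi.single_apply]
    simp only [revMatrix, Matrix.of_apply, mul_one, Matrix.col_apply]
    have hval : ((u.rev : Fin (m+1)) : ℕ) = m - (u : ℕ) := by
      rw [Fin.val_rev]
      omega
    have ha : (a : ℕ) < m + 1 := a.isLt
    have hu : (u : ℕ) < m + 1 := u.isLt
    by_cases h : (a : ℕ) + (u : ℕ) = (m + 1) - 1
    · rw [if_pos h, if_pos (Fin.ext (by omega))]
    · rw [if_neg h, if_neg (fun hh : a = u.rev => h (by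
        have := congrArg Fin.val hh
        omega))]
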